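/- For every n ≥ 1 and every 1 ≤ k ≤ n, the number of φ ∈ Leib(n) whose image has exactly k elements equals the number of permutations σ of {1,…,n} with exactly k−1 descents, where a descent of σ is an index i ∈ {1,…,n−1} with σ(i) > σ(i+1). -/

import Mathlib

open Finset

namespace Leib17

def res {n : ℕ} (f : Fin (n + 1) → Fin (n + 1)) (j : Fin n) : Fin n :=
  ⟨min (f j.castSucc).1 j.1, lt_of_le_of_lt (min_le_right _ _) j.isLt⟩

lemma image_last {n : ℕ} (f : Fin (n + 1) → Fin (n + 1)) :
    Finset.univ.image f
      = insert (f (Fin.last n)) (Finset.univ.image (fun j : Fin n => f j.castSucc)) := by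
  rw [Fin.univ_castSuccEmb, Finset.cons_eq_insert, Finset.image_insert, Finset.map_eq_image,
    Finset.image_image]
  rfl

lemma res_castSucc {n : ℕ} {f : Fin (n + 1) → Fin (n + 1)} {f' : Fin n → Fin n}
    (hf : ∀ j, f j ≤ j) (hres : res f = f') (j : Fin n) :
    f j.castSucc = (f' j).castSucc := by
  have h1 : ((res f j : Fin n) : ℕ) = f j.castSucc := by
    simp only [res]
    exact min_eq_left (hf j.castSucc)
  apply Fin.ext
  rw [Fin.coe_castSucc, ← h1, hres]

lemma fiber_card {n k : ℕ} (f' : Fin n → Fin n) :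
    (((Finset.univ.filter (fun f : Fin (n + 1) → Fin (n + 1) =>
        (∀ j, f j ≤ j) ∧ (Finset.univ.image f).card = k))).filter
      (fun f => res f = f')).card
    = if (∀ j, f' j ≤ j) then
        (if (Finset.univ.image f').card = k then k
         else if (Finset.univ.image f').card + 1 = k then (n + 1) - (Finset.univ.image f').card
         else 0)
      else 0 := by
  by_cases hsub : ∀ j, f' j ≤ j
  · rw [if_pos hsub]
    set g : Fin n → Fin (n + 1) := fun j => (f' j).castSucc with hg
    set Im' : Finset (Fin (n + 1)) := Finset.univ.image g with hIm
    have hgimg : (fun j : Fin n => f' j |>.castSucc) = g := rfl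
    have hbij : (((Finset.univ.filter (fun f : Fin (n + 1) → Fin (n + 1) =>
        (∀ j, f j ≤ j) ∧ (Finset.univ.image f).card = k))).filter
      (fun f => res f = f')).card
        = (Finset.univ.filter (fun v : Fin (n + 1) => (insert v Im').card = k)).card := by
      refine Finset.card_bij' (fun f _ => f (Fin.last n)) (fun v _ => Fin.snoc (α := fun _ => Fin (n + 1)) g v)
        ?hi ?hj ?li ?ri
      case hi =>
        intro f hf
        simp only [Finset.mem_filter, Finset.mem_univ, true_and] at hf ⊢
        obtain ⟨⟨h1, h2⟩, h3⟩ := hf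
        have h4 : (fun j : Fin n => f j.castSucc) = g := funext fun j => res_castSucc h1 h3 j
        rw [← h2, image_last f, h4]
      case hj =>
        intro v hv
        simp only [Finset.mem_filter, Finset.mem_univ, true_and] at hv ⊢
        have hsn : ∀ j : Fin (n + 1), Fin.snoc (α := fun _ => Fin (n + 1)) g v j ≤ j := by
          intro j
          induction j using Fin.lastCases with
          | last => simp [Fin.snoc_last, Fin.le_last]
          | cast j =>
            rw [Fin.snoc_castSucc]
            exact Fin.castSucc_le_castSucc_iff.mpr (hsub j)
        refine ⟨⟨hsn, ?_⟩, ?_⟩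
        · rw [image_last, Fin.snoc_last]
          have h4 : (fun j : Fin n => Fin.snoc (α := fun _ => Fin (n + 1)) g v j.castSucc) = g := by
            funext j; rw [Fin.snoc_castSucc]
          rw [h4, ← hIm, hv]
        · funext j
          apply Fin.ext
          have h5 : (Fin.snoc (α := fun _ => Fin (n + 1)) g v j.castSucc : Fin (n+1)) = (f' j).castSucc :=
            Fin.snoc_castSucc _ _ _
          simp only [res, h5]
          exact min_eq_left (hsub j)
      case li =>
        intro f hf
        simp only [Finset.mem_filter, Finset.mem_univ, true_and] at hf
        obtain ⟨⟨h1, _⟩, h3⟩ := hf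
        funext j
        show (Fin.snoc (α := fun _ => Fin (n + 1)) g (f (Fin.last n)) j : Fin (n + 1)) = f j
        induction j using Fin.lastCases with
        | last => rw [Fin.snoc_last]
        | cast j =>
          rw [Fin.snoc_castSucc]
          exact (res_castSucc h1 h3 j).symm
      case ri =>
        intro v _
        show (Fin.snoc (α := fun _ => Fin (n + 1)) g v (Fin.last n) : Fin (n + 1)) = v
        rw [Fin.snoc_last]
    rw [hbij]
    have hcard : Im'.card = (Finset.univ.image f').card := by
      have h6 : Im' = (Finset.univ.image f').image Fin.castSucc := by
        rw [hIm, hg, Finset.image_image]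
        rfl
      rw [h6, Finset.card_image_of_injective _ (Fin.castSucc_injective _)]
    by_cases h1 : (Finset.univ.image f').card = k
    · rw [if_pos h1]
      have heq : (Finset.univ.filter (fun v : Fin (n + 1) => (insert v Im').card = k)) = Im' := by
        ext v
        simp only [Finset.mem_filter, Finset.mem_univ, true_and]
        by_cases h : v ∈ Im'
        · rw [Finset.insert_eq_self.mpr h]
          simp only [h, iff_true]
          rw [hcard]; exact h1
        · rw [Finset.card_insert_of_notMem h]
          simp only [h, iff_false]
          rw [hcard, h1]
          exact Nat.succ_ne_self k
      rw [heq, hcard, h1]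
    · rw [if_neg h1]
      by_cases h2 : (Finset.univ.image f').card + 1 = k
      · rw [if_pos h2]
        have heq : (Finset.univ.filter (fun v : Fin (n + 1) => (insert v Im').card = k))
            = Im'ᶜ := by
          ext v
          simp only [Finset.mem_filter, Finset.mem_univ, true_and, Finset.mem_compl]
          by_cases h : v ∈ Im'
          · rw [Finset.insert_eq_self.mpr h]
            simp only [h, not_true, iff_false]
            rw [hcard]
            exact h1
          · rw [Finset.card_insert_of_notMem h]
            simp only [h, not_false_iff, iff_true]
            rw [hcard]
            exact h2
        rw [heq, Finset.card_compl, Fintype.card_fin, hcard]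
      · rw [if_neg h2]
        have heq : (Finset.univ.filter (fun v : Fin (n + 1) => (insert v Im').card = k))
            = ∅ := by
          ext v
          simp only [Finset.mem_filter, Finset.mem_univ, true_and, Finset.notMem_empty,
            iff_false]
          by_cases h : v ∈ Im'
          · rw [Finset.insert_eq_self.mpr h, hcard]
            exact h1
          · rw [Finset.card_insert_of_notMem h, hcard]
            exact fun hc => h2 hc
        rw [heq, Finset.card_empty]
  · rw [if_neg hsub]
    rw [Finset.card_eq_zero, Finset.filter_eq_empty_iff]
    intro f hf
    simp only [Finset.mem_filter, Finset.mem_univ, true_and] at hf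
    intro hres
    apply hsub
    intro j
    have h7 : ((f' j : Fin n) : ℕ) ≤ (j : ℕ) := by
      rw [← hres]
      simp only [res]
      exact min_le_right _ _
    exact h7

def Lb (n k : ℕ) : ℕ :=
  (Finset.univ.filter (fun f : Fin n → Fin n =>
    (∀ j, f j ≤ j) ∧ (Finset.univ.image f).card = k)).card

lemma Lb_succ (n k : ℕ) :
    Lb (n + 1) (k + 1) = (k + 1) * Lb n (k + 1) + (n + 1 - k) * Lb n k := by
  have hfib : ∀ x ∈ (Finset.univ.filter (fun f : Fin (n + 1) → Fin (n + 1) =>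
      (∀ j, f j ≤ j) ∧ (Finset.univ.image f).card = k + 1)), res x ∈ (Finset.univ : Finset (Fin n → Fin n)) :=
    fun x _ => Finset.mem_univ _
  rw [Lb, Finset.card_eq_sum_card_fiberwise hfib]
  have hpt : ∀ f' : Fin n → Fin n,
      ((Finset.univ.filter (fun f : Fin (n + 1) → Fin (n + 1) =>
        (∀ j, f j ≤ j) ∧ (Finset.univ.image f).card = k + 1)).filter
        (fun f => res f = f')).card
      = (k + 1) * (if (∀ j, f' j ≤ j) ∧ (Finset.univ.image f').card = k + 1 then 1 else 0)
        + (n + 1 - k) * (if (∀ j, f' j ≤ j) ∧ (Finset.univ.image f').card = k then 1 else 0) := by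
    intro f'
    rw [fiber_card]
    have hle : (Finset.univ.image f').card ≤ n := by
      calc (Finset.univ.image f').card ≤ (Finset.univ : Finset (Fin n)).card :=
            Finset.card_image_le
        _ = n := by rw [Finset.card_univ, Fintype.card_fin]
    split_ifs with hA hB hC hD hE <;> simp_all
  rw [Finset.sum_congr rfl (fun f' _ => hpt f')]
  rw [Finset.sum_add_distrib, ← Finset.mul_sum, ← Finset.mul_sum,
    ← Finset.card_filter, ← Finset.card_filter]
  rfl

lemma Lb_zero (n : ℕ) : Lb (n + 1) 0 = 0 := by
  rw [Lb, Finset.card_eq_zero, Finset.filter_eq_empty_iff]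
  intro f _
  rintro ⟨-, h⟩
  have : (Finset.univ.image f).Nonempty := ⟨f 0, Finset.mem_image_of_mem f (Finset.mem_univ 0)⟩
  rw [Finset.card_eq_zero.mp h] at this
  exact Finset.not_nonempty_empty this

/-- number of descents -/
def desC {n : ℕ} (w : Fin (n + 1) → Fin (n + 1)) : ℕ :=
  (Finset.univ.filter (fun i : Fin n => w i.succ < w i.castSucc)).card

def Ds (n d : ℕ) : ℕ :=
  (Finset.univ.filter (fun σ : Equiv.Perm (Fin (n + 1)) => desC ⇑σ = d)).card

def insFun {n : ℕ} (p : Fin (n + 2)) (σ : Equiv.Perm (Fin (n + 1))) :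
    Fin (n + 2) → Fin (n + 2) :=
  p.insertNth (Fin.last (n + 1)) (fun j => (σ j).castSucc)

lemma insFun_self {n : ℕ} (p : Fin (n + 2)) (σ : Equiv.Perm (Fin (n + 1))) :
    insFun p σ p = Fin.last (n + 1) :=
  Fin.insertNth_apply_same p _ _

lemma insFun_succAbove {n : ℕ} (p : Fin (n + 2)) (σ : Equiv.Perm (Fin (n + 1)))
    (j : Fin (n + 1)) : insFun p σ (p.succAbove j) = (σ j).castSucc :=
  Fin.insertNth_apply_succAbove p _ _ j

lemma insFun_inj {n : ℕ} (p : Fin (n + 2)) (σ : Equiv.Perm (Fin (n + 1))) :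
    Function.Injective (insFun p σ) := by
  intro a b hab
  by_cases ha : a = p <;> by_cases hb : b = p
  · rw [ha, hb]
  · exfalso
    obtain ⟨j, hj⟩ := Fin.exists_succAbove_eq hb
    rw [ha, insFun_self, ← hj, insFun_succAbove] at hab
    exact (Fin.ne_last_of_lt (Fin.castSucc_lt_last _)) hab.symm
  · exfalso
    obtain ⟨j, hj⟩ := Fin.exists_succAbove_eq ha
    rw [hb, insFun_self, ← hj, insFun_succAbove] at hab
    exact (Fin.ne_last_of_lt (Fin.castSucc_lt_last _)) hab
  · obtain ⟨j, hj⟩ := Fin.exists_succAbove_eq ha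
    obtain ⟨j', hj'⟩ := Fin.exists_succAbove_eq hb
    rw [← hj, ← hj', insFun_succAbove, insFun_succAbove] at hab
    rw [← hj, ← hj']
    congr 1
    exact σ.injective (Fin.castSucc_injective _ hab)

noncomputable def insP {n : ℕ} (p : Fin (n + 2)) (σ : Equiv.Perm (Fin (n + 1))) :
    Equiv.Perm (Fin (n + 2)) :=
  Equiv.ofBijective (insFun p σ) (Finite.injective_iff_bijective.mp (insFun_inj p σ))

lemma insP_apply {n : ℕ} (p : Fin (n + 2)) (σ : Equiv.Perm (Fin (n + 1))) (i : Fin (n + 2)) :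
    insP p σ i = insFun p σ i := rfl

lemma insP_inv_last {n : ℕ} (p : Fin (n + 2)) (σ : Equiv.Perm (Fin (n + 1))) :
    (insP p σ)⁻¹ (Fin.last (n + 1)) = p := by
  rw [Equiv.Perm.inv_eq_iff_eq]
  exact (insFun_self p σ).symm

lemma rem_ne_last {n : ℕ} (τ : Equiv.Perm (Fin (n + 2))) (j : Fin (n + 1)) :
    τ ((τ⁻¹ (Fin.last (n + 1))).succAbove j) ≠ Fin.last (n + 1) := by
  intro h
  have h2 : (τ⁻¹ (Fin.last (n + 1))).succAbove j = τ⁻¹ (Fin.last (n + 1)) :=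
    (Equiv.Perm.eq_inv_iff_eq).mpr h
  exact absurd h2 (Fin.succAbove_ne _ j)

def remFun {n : ℕ} (τ : Equiv.Perm (Fin (n + 2))) (j : Fin (n + 1)) : Fin (n + 1) :=
  (τ ((τ⁻¹ (Fin.last (n + 1))).succAbove j)).castPred (rem_ne_last τ j)

lemma remFun_inj {n : ℕ} (τ : Equiv.Perm (Fin (n + 2))) : Function.Injective (remFun τ) := by
  intro a b hab
  have h := congrArg Fin.castSucc hab
  rw [remFun, remFun, Fin.castSucc_castPred, Fin.castSucc_castPred] at h
  exact Fin.succAbove_right_injective (τ.injective h)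

noncomputable def remP {n : ℕ} (τ : Equiv.Perm (Fin (n + 2))) : Equiv.Perm (Fin (n + 1)) :=
  Equiv.ofBijective (remFun τ) (Finite.injective_iff_bijective.mp (remFun_inj τ))

lemma remP_insP {n : ℕ} (p : Fin (n + 2)) (σ : Equiv.Perm (Fin (n + 1))) :
    remP (insP p σ) = σ := by
  apply Equiv.ext
  intro j
  show remFun (insP p σ) j = σ j
  have : remFun (insP p σ) j
      = ((insP p σ) (((insP p σ)⁻¹ (Fin.last (n + 1))).succAbove j)).castPred _ := rfl
  rw [this]
  apply Fin.castSucc_injective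
  rw [Fin.castSucc_castPred]
  have h2 : ((insP p σ)⁻¹ (Fin.last (n + 1))) = p := insP_inv_last p σ
  rw [h2, insP_apply, insFun_succAbove]

lemma insP_remP {n : ℕ} (τ : Equiv.Perm (Fin (n + 2))) :
    insP (τ⁻¹ (Fin.last (n + 1))) (remP τ) = τ := by
  apply Equiv.ext
  intro i
  rw [insP_apply]
  rcases eq_or_ne i (τ⁻¹ (Fin.last (n + 1))) with rfl | hi
  · rw [insFun_self, Equiv.Perm.inv_def, Equiv.apply_symm_apply]
  · obtain ⟨j, hj⟩ := Fin.exists_succAbove_eq hi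
    rw [← hj, insFun_succAbove]
    show (remFun τ j).castSucc = _
    rw [remFun, Fin.castSucc_castPred]

def Good {n : ℕ} (p : Fin (n + 2)) (σ : Equiv.Perm (Fin (n + 1))) : Prop :=
  p = Fin.last (n + 1) ∨ ∃ j : Fin n, p = j.succ.castSucc ∧ σ j.succ < σ j.castSucc

instance {n : ℕ} (p : Fin (n + 2)) (σ : Equiv.Perm (Fin (n + 1))) :
    Decidable (Good p σ) := by
  unfold Good; infer_instance

lemma desC_insFun {n : ℕ} (σ : Equiv.Perm (Fin (n + 1))) (p : Fin (n + 2)) :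
    desC (insFun p σ) = if Good p σ then desC ⇑σ else desC ⇑σ + 1 := by
  have hdes : desC ⇑σ = ∑ j : Fin n, (if σ j.succ < σ j.castSucc then 1 else 0) :=
    Finset.card_filter _ _
  induction p using Fin.lastCases with
  | last =>
    have hg : Good (Fin.last (n + 1)) σ := Or.inl rfl
    rw [if_pos hg, desC, Finset.card_filter, Fin.sum_univ_castSucc, hdes]
    have h0 : (if insFun (Fin.last (n + 1)) σ (Fin.last n).succ
        < insFun (Fin.last (n + 1)) σ (Fin.last n).castSucc then 1 else 0) = 0 := by
      rw [Fin.succ_last, insFun_self]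
      exact if_neg (not_lt.mpr (Fin.le_last _))
    rw [h0, add_zero]
    apply Finset.sum_congr rfl
    intro j _
    have key : ∀ t : Fin (n + 1), insFun (Fin.last (n + 1)) σ t.castSucc = (σ t).castSucc := by
      intro t
      have h := insFun_succAbove (Fin.last (n + 1)) σ t
      rwa [Fin.succAbove_last] at h
    rw [Fin.succ_castSucc, key, key]
    simp only [Fin.castSucc_lt_castSucc_iff]
  | cast q =>
    rw [desC, Finset.card_filter, Fin.sum_univ_succAbove _ q]
    -- the term at position q is a descent
    have hq1 : (if insFun q.castSucc σ q.succ < insFun q.castSucc σ q.castSucc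
        then 1 else 0) = 1 := by
      have e1 : insFun q.castSucc σ q.castSucc = Fin.last (n + 1) := insFun_self _ _
      have e2 : insFun q.castSucc σ q.succ = (σ q).castSucc := by
        rw [← Fin.succAbove_of_le_castSucc q.castSucc q le_rfl, insFun_succAbove]
      rw [e1, e2]
      exact if_pos (Fin.castSucc_lt_last _)
    rw [hq1]
    -- the terms away from q
    have hterm : ∀ j : Fin n,
        (if insFun q.castSucc σ (q.succAbove j).succ
            < insFun q.castSucc σ (q.succAbove j).castSucc then 1 else 0)
        = if j.succ = q then 0 else (if σ j.succ < σ j.castSucc then 1 else 0) := by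
      intro j
      by_cases hq : j.succ = q
      · rw [if_pos hq]
        have hlt : j.castSucc < q := hq ▸ Fin.castSucc_lt_succ (i := j)
        rw [Fin.succAbove_of_castSucc_lt _ _ hlt]
        have e1 : (j.castSucc : Fin (n + 1)).succ = (q.castSucc : Fin (n + 2)) := by
          rw [Fin.succ_castSucc, hq]
        rw [e1, insFun_self]
        exact if_neg (not_lt.mpr (Fin.le_last _))
      · rw [if_neg hq]
        by_cases hlt : j.castSucc < q
        · rw [Fin.succAbove_of_castSucc_lt _ _ hlt]
          have hlt2 : j.succ < q := lt_of_le_of_ne (Fin.castSucc_lt_iff_succ_le.mp hlt) hq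
          have e1 : insFun q.castSucc σ (j.castSucc : Fin (n + 1)).succ
              = (σ j.succ).castSucc := by
            rw [Fin.succ_castSucc,
              ← Fin.succAbove_of_castSucc_lt q.castSucc j.succ
                (Fin.castSucc_lt_castSucc_iff.mpr hlt2),
              insFun_succAbove]
          have e2 : insFun q.castSucc σ ((j.castSucc : Fin (n + 1)).castSucc)
              = (σ j.castSucc).castSucc := by
            rw [← Fin.succAbove_of_castSucc_lt q.castSucc j.castSucc
                (Fin.castSucc_lt_castSucc_iff.mpr hlt),
              insFun_succAbove]
          rw [e1, e2]
          simp only [Fin.castSucc_lt_castSucc_iff]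
        · push_neg at hlt
          rw [Fin.succAbove_of_le_castSucc _ _ hlt]
          have hle2 : q ≤ j.succ := le_trans hlt (Fin.castSucc_le_succ j)
          have e1 : insFun q.castSucc σ (j.succ : Fin (n + 1)).succ
              = (σ j.succ).castSucc := by
            rw [← Fin.succAbove_of_le_castSucc q.castSucc j.succ
                (Fin.castSucc_le_castSucc_iff.mpr hle2),
              insFun_succAbove]
          have e2 : insFun q.castSucc σ ((j.succ : Fin (n + 1)).castSucc)
              = (σ j.castSucc).castSucc := by
            rw [← Fin.succ_castSucc,
              ← Fin.succAbove_of_le_castSucc q.castSucc j.castSucc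
                (Fin.castSucc_le_castSucc_iff.mpr hlt),
              insFun_succAbove]
          rw [e1, e2]
          simp only [Fin.castSucc_lt_castSucc_iff]
    rw [Finset.sum_congr rfl (fun j _ => hterm j)]
    -- now split on the shape of q
    induction q using Fin.cases with
    | zero =>
      have hsum : ∑ j : Fin n, (if j.succ = (0 : Fin (n + 1)) then 0
          else (if σ j.succ < σ j.castSucc then 1 else 0))
          = desC ⇑σ := by
        rw [hdes]
        exact Finset.sum_congr rfl fun j _ => if_neg (Fin.succ_ne_zero j)
      rw [hsum]
      have hgood : ¬ Good ((0 : Fin (n + 1)).castSucc) σ := by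
        rintro (h | ⟨j, hj, -⟩)
        · exact absurd h (Fin.ne_last_of_lt (Fin.castSucc_lt_last _))
        · exact Fin.succ_ne_zero j (Fin.castSucc_injective _ hj).symm
      rw [if_neg hgood, add_comm]
    | succ j0 =>
      have hsplit : ∑ j : Fin n, (if j.succ = j0.succ then 0
          else (if σ j.succ < σ j.castSucc then 1 else 0))
          = ∑ j ∈ Finset.univ.erase j0, (if σ j.succ < σ j.castSucc then 1 else 0) := by
        rw [← Finset.add_sum_erase _ _ (Finset.mem_univ j0), if_pos rfl, zero_add]
        exact Finset.sum_congr rfl fun j hj =>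
          if_neg (fun h => (Finset.mem_erase.mp hj).1 (Fin.succ_inj.mp h))
      rw [hsplit]
      have hdes2 : desC ⇑σ = (if σ j0.succ < σ j0.castSucc then 1 else 0)
          + ∑ j ∈ Finset.univ.erase j0, (if σ j.succ < σ j.castSucc then 1 else 0) := by
        rw [hdes]
        exact (Finset.add_sum_erase _ _ (Finset.mem_univ j0)).symm
      have hgood : Good (j0.succ.castSucc) σ ↔ σ j0.succ < σ j0.castSucc := by
        constructor
        · rintro (h | ⟨j, hj, hd⟩)
          · exact absurd h (Fin.ne_last_of_lt (Fin.castSucc_lt_last _))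
          · have : j = j0 := Fin.succ_inj.mp (Fin.castSucc_injective _ hj).symm
            rwa [this] at hd
        · intro hd
          exact Or.inr ⟨j0, rfl, hd⟩
      by_cases hd : σ j0.succ < σ j0.castSucc
      · rw [if_pos (hgood.mpr hd), hdes2, if_pos hd]
      · rw [if_neg (fun h => hd (hgood.mp h)), hdes2, if_neg hd, zero_add, add_comm]

lemma desC_le {n : ℕ} (σ : Equiv.Perm (Fin (n + 1))) : desC ⇑σ ≤ n := by
  calc desC ⇑σ ≤ (Finset.univ : Finset (Fin n)).card := Finset.card_filter_le _ _
    _ = n := by rw [Finset.card_univ, Fintype.card_fin]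

lemma card_good {n : ℕ} (σ : Equiv.Perm (Fin (n + 1))) :
    (Finset.univ.filter (fun p : Fin (n + 2) => Good p σ)).card = desC ⇑σ + 1 := by
  have heq : Finset.univ.filter (fun p : Fin (n + 2) => Good p σ)
      = insert (Fin.last (n + 1))
          ((Finset.univ.filter (fun j : Fin n => σ j.succ < σ j.castSucc)).image
            (fun j => j.succ.castSucc)) := by
    ext p
    simp only [Finset.mem_filter, Finset.mem_univ, true_and, Finset.mem_insert,
      Finset.mem_image]
    simp only [Good]
    constructor
    · rintro (h | ⟨j, hj, hd⟩)
      · exact Or.inl h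
      · exact Or.inr ⟨j, hd, hj.symm⟩
    · rintro (h | ⟨j, hd, hp⟩)
      · exact Or.inl h
      · exact Or.inr ⟨j, hp.symm, hd⟩
  rw [heq, Finset.card_insert_of_notMem, Finset.card_image_of_injective]
  · rfl
  · intro a b hab
    exact Fin.succ_inj.mp (Fin.castSucc_injective _ hab)
  · intro hmem
    obtain ⟨j, -, hj⟩ := Finset.mem_image.mp hmem
    exact Fin.ne_last_of_lt (Fin.castSucc_lt_last j.succ) hj

lemma card_ins_fiber {n : ℕ} (σ : Equiv.Perm (Fin (n + 1))) (d : ℕ) :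
    (Finset.univ.filter (fun p : Fin (n + 2) => desC (insFun p σ) = d)).card
    = if desC ⇑σ = d then d + 1
      else if desC ⇑σ + 1 = d then (n + 1) - desC ⇑σ else 0 := by
  by_cases h1 : desC ⇑σ = d
  · rw [if_pos h1]
    have heq : Finset.univ.filter (fun p : Fin (n + 2) => desC (insFun p σ) = d)
        = Finset.univ.filter (fun p : Fin (n + 2) => Good p σ) := by
      apply Finset.filter_congr
      intro p _
      rw [desC_insFun σ p]
      by_cases hg : Good p σ
      · simp [hg, h1]
      · simp only [hg, if_false, iff_false]
        omega
    rw [heq, card_good, h1]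
  · rw [if_neg h1]
    by_cases h2 : desC ⇑σ + 1 = d
    · rw [if_pos h2]
      have heq : Finset.univ.filter (fun p : Fin (n + 2) => desC (insFun p σ) = d)
          = (Finset.univ.filter (fun p : Fin (n + 2) => Good p σ))ᶜ := by
        ext p
        simp only [Finset.mem_filter, Finset.mem_univ, true_and, Finset.mem_compl]
        rw [desC_insFun σ p]
        by_cases hg : Good p σ
        · simp only [hg, if_true, not_true, iff_false]
          exact h1
        · simp [hg, h2]
      rw [heq, Finset.card_compl, card_good, Fintype.card_fin]
      have := desC_le σ
      omega
    · rw [if_neg h2]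
      rw [Finset.card_eq_zero, Finset.filter_eq_empty_iff]
      intro p _
      rw [desC_insFun σ p]
      by_cases hg : Good p σ
      · simp only [hg, if_true]
        exact h1
      · simp only [hg, if_false]
        exact h2

lemma Ds_fiber (n d : ℕ) :
    Ds (n + 1) d = ∑ σ : Equiv.Perm (Fin (n + 1)),
      (if desC ⇑σ = d then d + 1
       else if desC ⇑σ + 1 = d then (n + 1) - desC ⇑σ else 0) := by
  have hfib : ∀ τ ∈ (Finset.univ.filter (fun τ : Equiv.Perm (Fin (n + 2)) => desC ⇑τ = d)),
      remP τ ∈ (Finset.univ : Finset (Equiv.Perm (Fin (n + 1)))) := fun _ _ => Finset.mem_univ _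
  rw [Ds, Finset.card_eq_sum_card_fiberwise hfib]
  apply Finset.sum_congr rfl
  intro σ _
  rw [← card_ins_fiber σ d]
  refine Finset.card_bij' (fun τ _ => τ⁻¹ (Fin.last (n + 1))) (fun p _ => insP p σ)
    ?hi ?hj ?li ?ri
  case hi =>
    intro τ hτ
    simp only [Finset.mem_filter, Finset.mem_univ, true_and] at hτ ⊢
    obtain ⟨hd, hr⟩ := hτ
    have hins : insFun (τ⁻¹ (Fin.last (n + 1))) σ = ⇑τ := by
      rw [← hr]
      exact congrArg (fun e : Equiv.Perm (Fin (n + 2)) => ⇑e) (insP_remP τ)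
    rw [hins]
    exact hd
  case hj =>
    intro p hp
    simp only [Finset.mem_filter, Finset.mem_univ, true_and] at hp ⊢
    exact ⟨hp, remP_insP p σ⟩
  case li =>
    intro τ hτ
    simp only [Finset.mem_filter, Finset.mem_univ, true_and] at hτ
    show insP (τ⁻¹ (Fin.last (n + 1))) σ = τ
    rw [← hτ.2]
    exact insP_remP τ
  case ri =>
    intro p _
    exact insP_inv_last p σ

lemma Ds_succ_zero (n : ℕ) : Ds (n + 1) 0 = Ds n 0 := by
  rw [Ds_fiber]
  have hpt : ∀ σ : Equiv.Perm (Fin (n + 1)),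
      (if desC ⇑σ = 0 then 0 + 1 else if desC ⇑σ + 1 = 0 then (n + 1) - desC ⇑σ else 0)
      = if desC ⇑σ = 0 then 1 else 0 := by
    intro σ
    by_cases h : desC ⇑σ = 0
    · simp [h]
    · rw [if_neg h, if_neg h, if_neg (Nat.succ_ne_zero _)]
  rw [Finset.sum_congr rfl (fun σ _ => hpt σ), ← Finset.card_filter]
  rfl

lemma Ds_succ (n d : ℕ) :
    Ds (n + 1) (d + 1) = (d + 2) * Ds n (d + 1) + (n + 1 - d) * Ds n d := by
  rw [Ds_fiber]
  have hpt : ∀ σ : Equiv.Perm (Fin (n + 1)),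
      (if desC ⇑σ = d + 1 then (d + 1) + 1
       else if desC ⇑σ + 1 = d + 1 then (n + 1) - desC ⇑σ else 0)
      = (d + 2) * (if desC ⇑σ = d + 1 then 1 else 0)
        + (n + 1 - d) * (if desC ⇑σ = d then 1 else 0) := by
    intro σ
    have h := desC_le σ
    split_ifs <;> omega
  rw [Finset.sum_congr rfl (fun σ _ => hpt σ)]
  rw [Finset.sum_add_distrib, ← Finset.mul_sum, ← Finset.mul_sum,
    ← Finset.card_filter, ← Finset.card_filter]
  rfl

lemma main (n : ℕ) : ∀ k, Lb (n + 1) (k + 1) = Ds n k := by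
  induction n with
  | zero =>
    intro k
    cases k with
    | zero => decide
    | succ k =>
      have h1 : Lb 1 (k + 2) = 0 := by
        rw [Lb, Finset.card_eq_zero, Finset.filter_eq_empty_iff]
        intro f _
        rintro ⟨-, h⟩
        have hle : (Finset.univ.image f).card ≤ 1 := by
          calc (Finset.univ.image f).card ≤ (Finset.univ : Finset (Fin 1)).card :=
                Finset.card_image_le
            _ = 1 := by rw [Finset.card_univ, Fintype.card_fin]
        omega
      have h2 : Ds 0 (k + 1) = 0 := by
        rw [Ds, Finset.card_eq_zero, Finset.filter_eq_empty_iff]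
        intro σ _
        have : desC ⇑σ = 0 := by
          rw [desC]
          simp
        omega
      rw [h1, h2]
  | succ n ih =>
    intro k
    cases k with
    | zero =>
      rw [Lb_succ, Lb_zero, ih 0, Ds_succ_zero]
      simp
    | succ k =>
      have hco : (n + 1) + 1 - (k + 1) = n + 1 - k := by omega
      rw [Lb_succ, ih (k + 1), ih k, hco, Ds_succ]

end Leib17

/-- for every `n = m + 1 ≥ 1` and `1 ≤ k ≤ n`, the number of
subexceedent functions `φ ∈ Leib(n)` whose image has exactly `k` elements equals
the number of permutations of `{1,…,n}` with exactly `k − 1` descents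
(a descent being an index `i ∈ {1,…,n−1}` with `σ(i) > σ(i+1)`). -/
theorem card_leib_image_eq_card_descents (m k : ℕ) (hk1 : 1 ≤ k)
    (hk2 : k ≤ m + 1) :
    Nat.card {φ : Fin (m + 1) → Fin (m + 1) //
      (∀ j, φ j ≤ j) ∧ (Finset.univ.image φ).card = k} =
    Nat.card {σ : Equiv.Perm (Fin (m + 1)) //
      (Finset.univ.filter (fun i : Fin m => σ i.succ < σ i.castSucc)).card
        = k - 1} := by
  rw [Nat.card_eq_fintype_card, Nat.card_eq_fintype_card,
    Fintype.card_subtype, Fintype.card_subtype]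
  have hk : k - 1 + 1 = k := by omega
  have h := Leib17.main m (k - 1)
  rw [hk] at h
  exact h
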